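/- arXiv:1407.2706 — 3 statements merged into one kernel-verified Lean document; each statement's English description precedes it below -/
import Mathlib

section
/- Fix k ≠ 0 and the antilinear involution ρ of g_k determined by ρ(C)=-C, ρ(Z) = (i k̄/|k|) Z. The fixed-point real Lie superalgebra g_k^ρ is spanned over ℝ by C' = iC and Z' = bZ where b ∈ ℂ satisfies b/b̄ = i k̄/|k|, and its brackets are [C',C']=[C',Z']=0, [Z',Z'] = -2|b|²|k| C'. Any two such real forms (for different admissible b and k ≠ 0) are isomorphic over ℝ. -/
/-- The bracket of the Lie superalgebra `g_k`: even basis `C`, odd basis `Z`,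
`[C,C] = [C,Z] = 0`, `[Z,Z] = -2kC`; `(x, z)` stands for `xC + zZ`. -/
def gBr (k : ℂ) (p q : ℂ × ℂ) : ℂ × ℂ := (-2 * k * p.2 * q.2, 0)

/-- Fix `k ≠ 0` and the antilinear involution `ρ` of `g_k` with `ρ(C) = -C`,
`ρ(Z) = (i k̄/|k|) Z`.  For any `b ≠ 0` with `b/b̄ = i k̄/|k|`:
the fixed-point set of `ρ` is the real span of `C' = iC` and `Z' = bZ`;
the brackets of the real form are `[C',Z'] = 0` and
`[Z',Z'] = -2|b|²|k| C'`; and any two such real forms (for different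
admissible `b'` and `k' ≠ 0`) are isomorphic over `ℝ` (a rescaling
`Z' ↦ c·Z'`, `c > 0`, matches the structure constants). -/
theorem stmt8 (k b : ℂ) (hk : k ≠ 0) (hb : b ≠ 0)
    (hbb : b / (starRingEnd ℂ) b =
      Complex.I * (starRingEnd ℂ) k / (‖k‖ : ℂ)) :
    let ρ : ℂ × ℂ → ℂ × ℂ := fun p =>
      (-((starRingEnd ℂ) p.1),
        (Complex.I * (starRingEnd ℂ) k / (‖k‖ : ℂ)) *
          (starRingEnd ℂ) p.2)
    ({p : ℂ × ℂ | ρ p = p} =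
      {p : ℂ × ℂ | ∃ x y : ℝ, p = ((x : ℂ) * Complex.I, (y : ℂ) * b)}) ∧
    gBr k (Complex.I, 0) ((0 : ℂ), b) = 0 ∧
    gBr k ((0 : ℂ), b) ((0 : ℂ), b) =
      ((-2 * (‖b‖ : ℂ) ^ 2 * (‖k‖ : ℂ)) * Complex.I, 0) ∧
    (∀ k' b' : ℂ, k' ≠ 0 → b' ≠ 0 →
      b' / (starRingEnd ℂ) b' =
        Complex.I * (starRingEnd ℂ) k' / (‖k'‖ : ℂ) →
      ∃ c : ℝ, 0 < c ∧ ∀ y y' : ℝ,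
        -2 * ‖k'‖ * ‖b'‖ ^ 2 * ((c * y) * (c * y')) =
          -2 * ‖k‖ * ‖b‖ ^ 2 * (y * y')) := by
  intro ρ
  have hcb : (starRingEnd ℂ) b ≠ 0 := by simpa using hb
  set w : ℂ := Complex.I * (starRingEnd ℂ) k / (‖k‖ : ℂ) with hwdef
  have hbw : b = w * (starRingEnd ℂ) b := by
    field_simp at hbb; linear_combination hbb
  have hw0 : w ≠ 0 := by
    intro h
    rw [h, zero_mul] at hbw
    exact hb hbw
  refine ⟨?_, ?_, ?_, ?_⟩
  · ext p
    simp only [Set.mem_setOf_eq, ρ, Prod.ext_iff]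
    constructor
    · rintro ⟨h1, h2⟩
      refine ⟨p.1.im, (p.2 / b).re, ?_, ?_⟩
      · have : p.1.re = 0 := by
          have := congrArg Complex.re h1
          simp at this
          linarith
        apply Complex.ext <;> simp [this]
      · have hreal : (starRingEnd ℂ) (p.2 / b) = p.2 / b := by
          rw [map_div₀]
          have hc2 : (starRingEnd ℂ) p.2 = p.2 / w := by
            rw [eq_div_iff hw0]; linear_combination h2
          have hcb' : (starRingEnd ℂ) b = b / w := by
            rw [eq_div_iff hw0]; linear_combination -hbw
          rw [hc2, hcb']
          field_simp
        rw [Complex.conj_eq_iff_re] at hreal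
        rw [hreal]; field_simp
    · rintro ⟨x, y, hx, hy⟩
      constructor
      · rw [hx]; simp [Complex.conj_I]
      · rw [hy]; rw [map_mul]
        simp only [Complex.conj_ofReal]
        calc w * ((y:ℂ) * (starRingEnd ℂ) b) = (y:ℂ) * (w * (starRingEnd ℂ) b) := by ring
        _ = (y:ℂ) * b := by rw [← hbw]
  · simp [gBr]
  · simp only [gBr, Prod.mk.injEq, and_true]
    have hbb2 : b * b = w * ((‖b‖ : ℂ))^2 := by
      calc b * b = w * (b * (starRingEnd ℂ) b) := by linear_combination b * hbw
      _ = w * ((‖b‖ : ℂ))^2 := by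
          rw [Complex.mul_conj']
    have hkw : k * w = Complex.I * (‖k‖ : ℂ) := by
      rw [hwdef]
      have : k * (starRingEnd ℂ) k = ((‖k‖ : ℂ))^2 := Complex.mul_conj' k
      have habs : (‖k‖ : ℂ) ≠ 0 := by
        simpa using (norm_ne_zero_iff.mpr hk)
      field_simp
      linear_combination this
    calc -2 * k * b * b = -2 * (k * w) * ((‖b‖ : ℂ))^2 := by
          rw [mul_assoc (-2*k), hbb2]; ring
      _ = _ := by rw [hkw]; ring
  · intro k' b' hk' hb' _
    have h1 : 0 < ‖k‖ * ‖b‖ ^ 2 :=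
      mul_pos (norm_pos_iff.mpr hk) (pow_pos (norm_pos_iff.mpr hb) 2)
    have h2 : 0 < ‖k'‖ * ‖b'‖ ^ 2 :=
      mul_pos (norm_pos_iff.mpr hk') (pow_pos (norm_pos_iff.mpr hb') 2)
    refine ⟨Real.sqrt ((‖k‖ * ‖b‖ ^ 2) / (‖k'‖ * ‖b'‖ ^ 2)), Real.sqrt_pos.mpr (div_pos h1 h2), ?_⟩
    intro y y'
    have hsq : (Real.sqrt ((‖k‖ * ‖b‖ ^ 2) / (‖k'‖ * ‖b'‖ ^ 2)))^2 = (‖k‖ * ‖b‖ ^ 2) / (‖k'‖ * ‖b'‖ ^ 2) :=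
      Real.sq_sqrt (le_of_lt (div_pos h1 h2))
    have : ‖k'‖ * ‖b'‖ ^ 2 * (Real.sqrt ((‖k‖ * ‖b‖ ^ 2) / (‖k'‖ * ‖b'‖ ^ 2)))^2 = ‖k‖ * ‖b‖ ^ 2 := by
      rw [hsq]; field_simp
    linear_combination (-2 * y * y') * this
end

section
/- Let s_k(w,η) = (w̄, u η̄) be a map on T-points of (C^{1|1})^×_k reducing to complex conjugation, with u an invertible even function. Then s_k is a group homomorphism for the product (w,η)·(w',η') = (ww'+kηη', wη'+w'η) if and only if u² = k̄/k; in particular u is a constant complex number of modulus 1, and s_k is then involutive. -/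
/-- Let `s_k(w,η) = (w̄, u·η̄)` on pairs with entries in a commutative
superalgebra `A` equipped with a conjugation `J` (an involutive `ℂ`-antilinear
ring morphism), reducing to complex conjugation on scalars, with `u ∈ ℂ`.
Assuming `A` has odd elements whose conjugates multiply faithfully, `s_k` is a
group homomorphism for the product `(w,η)·(w',η') = (ww' + kηη', wη' + w'η)`
if and only if `u² = k̄/k`; in particular `u` then has modulus `1`, and `s_k`
is involutive. -/
theorem stmt11 (k : ℂ) (hk : k ≠ 0) (u : ℂ)
    (A : Type) [Ring A] [Algebra ℂ A]
    (A1 : AddSubgroup A)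
    (J : A →+* A)
    (hJanti : ∀ (c : ℂ) (x : A),
      J (algebraMap ℂ A c * x) = algebraMap ℂ A ((starRingEnd ℂ) c) * J x)
    (hJ2 : ∀ x : A, J (J x) = x)
    (hfaithful : ∃ η ∈ A1, ∃ η' ∈ A1,
      ∀ c : ℂ, algebraMap ℂ A c * (J η * J η') = 0 → c = 0) :
    let kA := algebraMap ℂ A k
    let uA := algebraMap ℂ A u
    let mulP : A × A → A × A → A × A := fun p q =>
      (p.1 * q.1 + kA * (p.2 * q.2), p.1 * q.2 + q.1 * p.2)
    let sk : A × A → A × A := fun p => (J p.1, uA * J p.2)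
    ((∀ p q : A × A, p.2 ∈ A1 → q.2 ∈ A1 →
        sk (mulP p q) = mulP (sk p) (sk q)) ↔
      u ^ 2 = (starRingEnd ℂ) k / k) ∧
    (u ^ 2 = (starRingEnd ℂ) k / k → ‖u‖ = 1) ∧
    (u ^ 2 = (starRingEnd ℂ) k / k → ∀ p : A × A, sk (sk p) = p) := by
  intro kA uA mulP sk
  -- scalars are central
  have hc : ∀ (c : ℂ) (x y : A),
      x * (algebraMap ℂ A c * y) = algebraMap ℂ A c * (x * y) := by
    intro c x y
    rw [← mul_assoc, ← Algebra.commutes, mul_assoc]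
  have hJk : J (algebraMap ℂ A k) = algebraMap ℂ A ((starRingEnd ℂ) k) := by
    simpa using hJanti k 1
  -- the main algebraic identity
  have hmain : ∀ x y : A,
      algebraMap ℂ A k * (algebraMap ℂ A u * x * (algebraMap ℂ A u * y)) =
        algebraMap ℂ A (k * u ^ 2) * (x * y) := by
    intro x y
    simp only [← Algebra.smul_def, smul_mul_smul_comm, mul_smul_comm,
      smul_mul_assoc, smul_smul]
    congr 1
    ring
  have habs : u ^ 2 = (starRingEnd ℂ) k / k → ‖u‖ = 1 := by
    intro h
    have h1 : ‖u‖ ^ 2 = 1 := by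
      rw [← norm_pow, h, norm_div, Complex.norm_conj, div_self]
      simpa using hk
    nlinarith [norm_nonneg u]
  refine ⟨?_, habs, ?_⟩
  · constructor
    · intro H
      obtain ⟨η, hη, η', hη', hf⟩ := hfaithful
      have := H (0, η) (0, η') hη hη'
      simp only [mulP, sk, kA, uA] at this
      have h1 := congrArg Prod.fst this
      simp only [zero_mul, mul_zero, add_zero, zero_add, map_zero, map_mul] at h1
      rw [← mul_assoc, hJk, mul_assoc, hmain] at h1
      have key : algebraMap ℂ A ((starRingEnd ℂ) k - k * u ^ 2) * (J η * J η') = 0 := by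
        rw [map_sub, sub_mul, h1, sub_self]
      have h2 := hf _ key
      have h3 : (starRingEnd ℂ) k = k * u ^ 2 := by linear_combination h2
      field_simp
      linear_combination -h3
    · intro h p q _ _
      have hk2 : k * u ^ 2 = (starRingEnd ℂ) k := by
        field_simp at h; linear_combination h
      simp only [mulP, sk, kA, uA, Prod.mk.injEq, map_add, map_mul]
      constructor
      · rw [hJk, ← hk2]
        simp only [← Algebra.smul_def, smul_mul_smul_comm, mul_smul_comm,
          smul_mul_assoc, smul_smul]
        congr 2
        ring
      · rw [mul_add, hc, hc]
  · intro h p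
    have hu : u * (starRingEnd ℂ) u = 1 := by
      rw [Complex.mul_conj]
      norm_cast
      rw [← Complex.sq_norm, habs h, one_pow]
    obtain ⟨a, b⟩ := p
    simp only [sk, uA, Prod.mk.injEq]
    refine ⟨hJ2 a, ?_⟩
    rw [hJanti u (J b), hJ2, ← mul_assoc, ← map_mul, hu, map_one, one_mul]
end

section
/- The map p(t,τ) = (e^{it}, e^{πi/4} e^{it} τ) is a group homomorphism from the additive supergroup with law (t,τ)·(t',τ') = (t+t'+ττ', τ+τ') to the multiplicative supergroup with law (w,η)·(w',η') = (ww'+ηη', wη'+w'η), and its image satisfies the reality conditions w = (w̄)^{-1}, η = i (w̄)^{-2} η̄ defining S^{1|1}. -/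
lemma exp_sq_zero_aux {A : Type} [NormedRing A] [NormedAlgebra ℂ A] [CompleteSpace A]
    (x : A) (h : x * x = 0) : NormedSpace.exp x = 1 + x := by
  rw [NormedSpace.exp_eq_tsum ℂ]
  show (∑' n : ℕ, ((n.factorial : ℂ))⁻¹ • x ^ n) = 1 + x
  have hpow : ∀ n, 2 ≤ n → x ^ n = 0 := by
    intro n hn
    obtain ⟨m, rfl⟩ := Nat.exists_eq_add_of_le hn
    rw [pow_add, pow_two, h, zero_mul]
  rw [tsum_eq_sum (s := ({0, 1} : Finset ℕ)) (by
    intro b hb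
    have hb2 : 2 ≤ b := by
      simp only [Finset.mem_insert, Finset.mem_singleton] at hb
      omega
    rw [hpow b hb2, smul_zero])]
  rw [Finset.sum_pair (by norm_num : (0 : ℕ) ≠ 1)]
  simp

lemma cc_aux : Complex.exp (Complex.I * Real.pi / 4) * Complex.exp (Complex.I * Real.pi / 4)
    = Complex.I := by
  rw [← Complex.exp_add]
  have h : Complex.I * (Real.pi : ℂ) / 4 + Complex.I * (Real.pi : ℂ) / 4
      = ((Real.pi / 2 : ℝ) : ℂ) * Complex.I := by push_cast; ring
  rw [h, Complex.exp_mul_I, ← Complex.ofReal_cos, ← Complex.ofReal_sin,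
    Real.cos_pi_div_two, Real.sin_pi_div_two]
  simp

lemma ic_aux : Complex.I * (starRingEnd ℂ) (Complex.exp (Complex.I * Real.pi / 4))
    = Complex.exp (Complex.I * Real.pi / 4) := by
  have h1 : (starRingEnd ℂ) (Complex.I * (Real.pi : ℂ) / 4)
      = -(Complex.I * (Real.pi : ℂ) / 4) := by
    rw [map_div₀, map_mul, Complex.conj_I, Complex.conj_ofReal, map_ofNat]
    ring
  rw [← Complex.exp_conj, h1]
  have h2 : (Complex.I * Complex.exp (-(Complex.I * (Real.pi : ℂ) / 4)))
        * Complex.exp (Complex.I * (Real.pi : ℂ) / 4)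
      = Complex.exp (Complex.I * (Real.pi : ℂ) / 4)
        * Complex.exp (Complex.I * (Real.pi : ℂ) / 4) := by
    rw [cc_aux, mul_assoc, ← Complex.exp_add, neg_add_cancel, Complex.exp_zero, mul_one]
  exact mul_right_cancel₀ (Complex.exp_ne_zero _) h2

/-- In a (complete normed) commutative superalgebra `A` over `ℂ` with
conjugation `J`, the map `p(t,τ) = (e^{it}, e^{πi/4} e^{it} τ)` is a group
homomorphism from the additive supergroup `ℝ^{1|1}` with law
`(t,τ)·(t',τ') = (t+t'+ττ', τ+τ')` (on real points: `t` even, `τ` odd, both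
fixed by `J`) to the multiplicative supergroup with law
`(w,η)·(w',η') = (ww'+ηη', wη'+w'η)`, and its image satisfies the reality
conditions `w = (w̄)⁻¹`, `η = i (w̄)⁻² η̄` defining `S^{1|1}`. -/
theorem stmt13 (A : Type) [NormedRing A] [NormedAlgebra ℂ A] [CompleteSpace A]
    (A0 A1 : AddSubgroup A)
    (h00 : ∀ a ∈ A0, ∀ b ∈ A0, a * b ∈ A0)
    (h01 : ∀ a ∈ A0, ∀ b ∈ A1, a * b ∈ A1)
    (h11 : ∀ a ∈ A1, ∀ b ∈ A1, a * b ∈ A0)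
    (hone : (1 : A) ∈ A0)
    (hcentral : ∀ a ∈ A0, ∀ x : A, a * x = x * a)
    (hanti : ∀ a ∈ A1, ∀ b ∈ A1, a * b = -(b * a))
    (J : A →+* A)
    (hJanti : ∀ (c : ℂ) (x : A),
      J (algebraMap ℂ A c * x) = algebraMap ℂ A ((starRingEnd ℂ) c) * J x)
    (hJ2 : ∀ x : A, J (J x) = x)
    (hJcont : Continuous J)
    (t τ t' τ' : A)
    (ht : t ∈ A0) (hτ : τ ∈ A1) (ht' : t' ∈ A0) (hτ' : τ' ∈ A1)
    (hJt : J t = t) (hJτ : J τ = τ) (hJt' : J t' = t') (hJτ' : J τ' = τ') :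
    let i := algebraMap ℂ A Complex.I
    let c := algebraMap ℂ A (Complex.exp (Complex.I * Real.pi / 4))
    let p : A → A → A × A := fun s σ =>
      (NormedSpace.exp (i * s), c * NormedSpace.exp (i * s) * σ)
    (p (t + t' + τ * τ') (τ + τ') =
      ((p t τ).1 * (p t' τ').1 + (p t τ).2 * (p t' τ').2,
       (p t τ).1 * (p t' τ').2 + (p t' τ').1 * (p t τ).2)) ∧
    ((p t τ).1 = Ring.inverse (J (p t τ).1)) ∧
    ((p t τ).2 =
      i * (Ring.inverse (J (p t τ).1) * Ring.inverse (J (p t τ).1)) *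
        J ((p t τ).2)) := by
  intro i c p
  letI : NormedAlgebra ℚ A := NormedAlgebra.restrictScalars ℚ ℂ A
  simp only [p, i, c]
  set ai := algebraMap ℂ A Complex.I with hai_def
  set ac := algebraMap ℂ A (Complex.exp (Complex.I * Real.pi / 4)) with hac_def
  have hi : ∀ x : A, ai * x = x * ai := fun x => Algebra.commutes Complex.I x
  have hc : ∀ x : A, ac * x = x * ac := fun x => Algebra.commutes _ x
  -- squares of odd elements vanish
  have sq_zero : ∀ σ ∈ A1, σ * σ = 0 := by
    intro σ hσ
    have h1 : σ * σ = -(σ * σ) := hanti σ hσ σ hσ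
    have h2 : σ * σ + σ * σ = 0 := by nth_rewrite 1 [h1]; exact neg_add_cancel (σ * σ)
    have h3 : (2 : ℂ) • (σ * σ) = 0 := by rw [two_smul]; exact h2
    calc σ * σ = ((1/2 : ℂ) * 2) • (σ * σ) := by norm_num
      _ = (1/2 : ℂ) • ((2 : ℂ) • (σ * σ)) := by rw [mul_smul]
      _ = 0 := by rw [h3, smul_zero]
  have hτ2 : τ * τ = 0 := sq_zero τ hτ
  have hτ'2 : τ' * τ' = 0 := sq_zero τ' hτ'
  have hτ'τ : τ' * τ = -(τ * τ') := hanti τ' hτ' τ hτ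
  -- centrality of i*s for s even
  have hits : ∀ s ∈ A0, ∀ x : A, Commute (ai * s) x := by
    intro s hs x
    show (ai * s) * x = x * (ai * s)
    calc ai * s * x = ai * (x * s) := by rw [mul_assoc, hcentral s hs x]
      _ = x * (ai * s) := by rw [← mul_assoc, hi x, mul_assoc]
  set E := NormedSpace.exp (ai * t) with hE_def
  set E' := NormedSpace.exp (ai * t') with hE'_def
  have hE : ∀ x : A, E * x = x * E := fun x => (hits t ht x).exp_left
  have hE' : ∀ x : A, E' * x = x * E' := fun x => (hits t' ht' x).exp_left
  -- (τ τ')² = 0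
  have hττ'sq : (τ * τ') * (τ * τ') = 0 := by
    calc (τ * τ') * (τ * τ') = τ * ((τ' * τ) * τ') := by noncomm_ring
      _ = τ * ((-(τ * τ')) * τ') := by rw [hτ'τ]
      _ = -((τ * τ) * (τ' * τ')) := by noncomm_ring
      _ = 0 := by rw [hτ2, zero_mul, neg_zero]
  have hiττ'sq : (ai * (τ * τ')) * (ai * (τ * τ')) = 0 := by
    calc (ai * (τ * τ')) * (ai * (τ * τ'))
        = ai * (((τ * τ') * ai) * (τ * τ')) := by noncomm_ring
      _ = ai * ((ai * (τ * τ')) * (τ * τ')) := by rw [← hi (τ * τ')]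
      _ = ai * (ai * ((τ * τ') * (τ * τ'))) := by noncomm_ring
      _ = 0 := by rw [hττ'sq, mul_zero, mul_zero]
  -- exponential of the sum
  have hexp_sum : NormedSpace.exp (ai * (t + t' + τ * τ'))
      = E * E' * (1 + ai * (τ * τ')) := by
    have hsplit : ai * (t + t' + τ * τ') = (ai * t + ai * t') + ai * (τ * τ') := by
      noncomm_ring
    rw [hsplit,
      NormedSpace.exp_add_of_commute (Commute.add_left (hits t ht _) (hits t' ht' _)),
      NormedSpace.exp_add_of_commute (hits t ht (ai * t')),
      exp_sq_zero_aux _ hiττ'sq, ← hE_def, ← hE'_def]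
  -- ac * ac = ai
  have hacac : ac * ac = ai := by
    have h := congrArg (algebraMap ℂ A) cc_aux
    rw [map_mul] at h
    exact h
  -- FIRST COMPONENT
  have hr : (ac * E * τ) * (ac * E' * τ') = E * E' * (ai * (τ * τ')) := by
    calc (ac * E * τ) * (ac * E' * τ')
        = ac * E * ((τ * ac) * (E' * τ')) := by noncomm_ring
      _ = ac * E * ((ac * τ) * (E' * τ')) := by rw [← hc τ]
      _ = ac * ((E * ac) * ((τ * E') * τ')) := by noncomm_ring
      _ = ac * ((ac * E) * ((E' * τ) * τ')) := by rw [hE ac, ← hE' τ]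
      _ = (ac * ac) * (E * (E' * (τ * τ'))) := by noncomm_ring
      _ = ai * (E * (E' * (τ * τ'))) := by rw [hacac]
      _ = (ai * E) * (E' * (τ * τ')) := by noncomm_ring
      _ = (E * ai) * (E' * (τ * τ')) := by rw [hi E]
      _ = E * ((ai * E') * (τ * τ')) := by noncomm_ring
      _ = E * ((E' * ai) * (τ * τ')) := by rw [hi E']
      _ = E * E' * (ai * (τ * τ')) := by noncomm_ring
  have hfst : NormedSpace.exp (ai * (t + t' + τ * τ'))
      = E * E' + (ac * E * τ) * (ac * E' * τ') := by
    rw [hexp_sum, hr]; noncomm_ring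
  -- SECOND COMPONENT
  have hkill : (ai * (τ * τ')) * (τ + τ') = 0 := by
    calc (ai * (τ * τ')) * (τ + τ')
        = ai * (τ * (τ' * τ) + (τ * τ') * τ') := by noncomm_ring
      _ = ai * (τ * (-(τ * τ')) + (τ * τ') * τ') := by rw [hτ'τ]
      _ = ai * (-((τ * τ) * τ') + τ * (τ' * τ')) := by noncomm_ring
      _ = 0 := by rw [hτ2, hτ'2]; simp
  have hs1 : E * (ac * E' * τ') = ac * (E * E') * τ' := by
    calc E * (ac * E' * τ') = (E * ac) * (E' * τ') := by noncomm_ring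
      _ = (ac * E) * (E' * τ') := by rw [hE ac]
      _ = ac * (E * E') * τ' := by noncomm_ring
  have hs2 : E' * (ac * E * τ) = ac * (E * E') * τ := by
    calc E' * (ac * E * τ) = (E' * ac) * (E * τ) := by noncomm_ring
      _ = (ac * E') * (E * τ) := by rw [hE' ac]
      _ = ac * ((E' * E) * τ) := by noncomm_ring
      _ = ac * ((E * E') * τ) := by rw [hE' E]
      _ = ac * (E * E') * τ := by noncomm_ring
  have hsnd : ac * NormedSpace.exp (ai * (t + t' + τ * τ')) * (τ + τ')
      = E * (ac * E' * τ') + E' * (ac * E * τ) := by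
    rw [hexp_sum, hs1, hs2]
    calc ac * (E * E' * (1 + ai * (τ * τ'))) * (τ + τ')
        = ac * (E * E') * (τ + τ') + ac * (E * E') * ((ai * (τ * τ')) * (τ + τ')) := by
          noncomm_ring
      _ = ac * (E * E') * (τ + τ') := by rw [hkill, mul_zero, add_zero]
      _ = ac * (E * E') * τ' + ac * (E * E') * τ := by noncomm_ring
  -- J of E
  have hJit : J (ai * t) = -(ai * t) := by
    have h := hJanti Complex.I t
    rw [Complex.conj_I, map_neg, hJt] at h
    show J (algebraMap ℂ A Complex.I * t) = -(algebraMap ℂ A Complex.I * t)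
    rw [h, neg_mul]
  have hJE : J E = NormedSpace.exp (-(ai * t)) := by
    rw [hE_def, NormedSpace.map_exp J hJcont, hJit]
  have hinv : Ring.inverse (J E) = E := by
    rw [hJE, Ring.inverse_exp, neg_neg]
  have hEF : E * NormedSpace.exp (-(ai * t)) = 1 := by
    rw [hE_def, ← NormedSpace.exp_add_of_commute (Commute.refl (ai * t)).neg_right,
      add_neg_cancel, NormedSpace.exp_zero]
  refine ⟨Prod.ext hfst hsnd, hinv.symm, ?_⟩
  -- reality condition for the odd component
  rw [hinv]
  set acb := algebraMap ℂ A ((starRingEnd ℂ) (Complex.exp (Complex.I * Real.pi / 4)))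
    with hacb_def
  have hcb : ∀ x : A, acb * x = x * acb := fun x => Algebra.commutes _ x
  have hiacb : ai * acb = ac := by
    have h := congrArg (algebraMap ℂ A) ic_aux
    rw [map_mul] at h
    exact h
  have hJterm : J (ac * E * τ) = acb * (NormedSpace.exp (-(ai * t)) * τ) := by
    rw [mul_assoc]
    refine (hJanti _ (E * τ)).trans ?_
    rw [map_mul, hJτ, hJE]
  rw [hJterm]
  symm
  calc ai * (E * E) * (acb * (NormedSpace.exp (-(ai * t)) * τ))
      = ai * (E * ((E * acb) * (NormedSpace.exp (-(ai * t)) * τ))) := by noncomm_ring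
    _ = ai * (E * ((acb * E) * (NormedSpace.exp (-(ai * t)) * τ))) := by rw [← hcb E]
    _ = ai * ((E * acb) * (E * (NormedSpace.exp (-(ai * t)) * τ))) := by noncomm_ring
    _ = ai * ((acb * E) * (E * (NormedSpace.exp (-(ai * t)) * τ))) := by rw [← hcb E]
    _ = (ai * acb) * (E * ((E * NormedSpace.exp (-(ai * t))) * τ)) := by noncomm_ring
    _ = ac * (E * (1 * τ)) := by rw [hiacb, hEF]
    _ = ac * E * τ := by rw [one_mul, mul_assoc]
end
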